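/- Let K be a field of characteristic zero, a ∈ K*, and D the derivation of K[X,Y] with D(X) = aX + Y, D(Y) = aY. Then an automorphism ρ of K[X,Y] commutes with D if and only if ρ(X) = αX + βY and ρ(Y) = αY for some α ∈ K*, β ∈ K. -/

import Mathlib

open MvPolynomial

namespace IsotropyJordanAux

variable {K : Type*} [Field K] [CharZero K]

/-- Coefficient of a partial derivative. -/
lemma coeff_pderiv (i : Fin 2) (m : Fin 2 →₀ ℕ) (p : MvPolynomial (Fin 2) K) :
    coeff m (pderiv i p) = ((m i : K) + 1) * coeff (m + Finsupp.single i 1 : Fin 2 →₀ ℕ) p := by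
  classical
  induction p using MvPolynomial.induction_on' with
  | monomial s r =>
    rw [pderiv_monomial, coeff_monomial, coeff_monomial]
    split_ifs with h1 h2 h2
    · subst h2
      have hsi : (m + Finsupp.single i 1 : Fin 2 →₀ ℕ) i = m i + 1 := by
        simp [Finsupp.add_apply]
      rw [hsi]
      push_cast
      ring
    · -- s - single i 1 = m but s ≠ m + single i 1 : then s i = 0
      have hsi : s i = 0 := by
        by_contra hne
        apply h2
        have hle : Finsupp.single i 1 ≤ s := by
          rw [Finsupp.single_le_iff]
          omega
        rw [← h1, tsub_add_cancel_of_le hle]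
      rw [hsi]
      simp
    · exfalso
      apply h1
      subst h2
      simp
    · ring
  | add p q hp hq =>
    simp only [map_add, coeff_add, hp, hq]
    ring

lemma coeff_X_mul_pderiv_self (i : Fin 2) (m : Fin 2 →₀ ℕ) (p : MvPolynomial (Fin 2) K) :
    coeff m (X i * pderiv i p) = (m i : K) * coeff m p := by
  classical
  rw [coeff_X_mul', coeff_pderiv]
  split_ifs with h
  · rw [Finsupp.mem_support_iff] at h
    have hle : Finsupp.single i 1 ≤ m := by
      rw [Finsupp.single_le_iff]; omega
    rw [tsub_add_cancel_of_le hle]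
    congr 1
    have h1 : (m - Finsupp.single i 1 : Fin 2 →₀ ℕ) i = m i - 1 := by
      simp [Finsupp.tsub_apply]
    rw [h1]
    have h2 : m i - 1 + 1 = m i := by omega
    rw [← h2]
    push_cast
    ring
  · rw [Finsupp.mem_support_iff, not_not] at h
    simp [h]

lemma coeff_X_mul_pderiv (i j : Fin 2) (m : Fin 2 →₀ ℕ) (p : MvPolynomial (Fin 2) K) :
    coeff m (X j * pderiv i p) =
      if m j ≠ 0 then
        ((((m - Finsupp.single j 1 : Fin 2 →₀ ℕ) : Fin 2 → ℕ) i : K) + 1) *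
          coeff (m - Finsupp.single j 1 + Finsupp.single i 1) p
      else 0 := by
  classical
  rw [coeff_X_mul', coeff_pderiv]
  simp [Finsupp.mem_support_iff]

/-- The explicit formula for any derivation with the given values on generators. -/
lemma D_eq (a : K) (D : Derivation K (MvPolynomial (Fin 2) K) (MvPolynomial (Fin 2) K))
    (hDX : D (X 0) = C a * X 0 + X 1) (hDY : D (X 1) = C a * X 1)
    (p : MvPolynomial (Fin 2) K) :
    D p = (C a * X 0 + X 1) * pderiv 0 p + (C a * X 1) * pderiv 1 p := by
  have hD : D = (C a * X 0 + X 1 : MvPolynomial (Fin 2) K) • (pderiv (0 : Fin 2) : Derivation K (MvPolynomial (Fin 2) K) (MvPolynomial (Fin 2) K)) + (C a * X 1 : MvPolynomial (Fin 2) K) • (pderiv (1 : Fin 2)) := by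
    apply derivation_ext
    intro i
    fin_cases i <;>
      simp [Derivation.add_apply, Derivation.smul_apply, hDX, hDY, smul_eq_mul]
  rw [hD]
  simp [Derivation.add_apply, Derivation.smul_apply, smul_eq_mul]

/-- The coefficient recursion for `D`. -/
lemma coeff_D (a : K) (D : Derivation K (MvPolynomial (Fin 2) K) (MvPolynomial (Fin 2) K))
    (hDX : D (X 0) = C a * X 0 + X 1) (hDY : D (X 1) = C a * X 1)
    (p : MvPolynomial (Fin 2) K) (m : Fin 2 →₀ ℕ) :
    coeff m (D p) = a * ((m 0 : K) + (m 1 : K)) * coeff m p +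
      (if m 1 ≠ 0 then
        ((((m - Finsupp.single 1 1 : Fin 2 →₀ ℕ) : Fin 2 → ℕ) 0 : K) + 1) *
          coeff (m - Finsupp.single 1 1 + Finsupp.single 0 1) p
      else 0) := by
  rw [D_eq a D hDX hDY, add_mul, mul_assoc, mul_assoc]
  rw [coeff_add, coeff_add, coeff_C_mul, coeff_C_mul, coeff_X_mul_pderiv_self,
    coeff_X_mul_pderiv_self, coeff_X_mul_pderiv]
  ring

/-- The key vanishing lemma: an eigenvector (mod degree-1 inhomogeneity) of the coefficient
recursion has no components outside total degree 1. -/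
lemma vanish (a : K) (ha : a ≠ 0) (Q R : MvPolynomial (Fin 2) K)
    (hR : ∀ m : Fin 2 →₀ ℕ, m 0 + m 1 ≠ 1 → coeff m R = 0)
    (h : ∀ m : Fin 2 →₀ ℕ,
      a * ((m 0 : K) + (m 1 : K)) * coeff m Q +
        (if m 1 ≠ 0 then
          ((((m - Finsupp.single 1 1 : Fin 2 →₀ ℕ) : Fin 2 → ℕ) 0 : K) + 1) *
            coeff (m - Finsupp.single 1 1 + Finsupp.single 0 1) Q
        else 0) = a * coeff m Q + coeff m R) :
    ∀ m : Fin 2 →₀ ℕ, m 0 + m 1 ≠ 1 → coeff m Q = 0 := by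
  suffices H : ∀ n : ℕ, ∀ m : Fin 2 →₀ ℕ, m 1 = n → m 0 + m 1 ≠ 1 → coeff m Q = 0 by
    intro m hm; exact H (m 1) m rfl hm
  intro n
  induction n with
  | zero =>
    intro m hm1 hm
    have heq := h m
    rw [if_neg (by simp [hm1]), hR m hm] at heq
    have hfac : coeff m Q * (a * (((m 0 : K) + (m 1 : K)) - 1)) = 0 := by
      linear_combination heq
    rcases mul_eq_zero.mp hfac with h0 | h0
    · exact h0
    · exfalso
      rcases mul_eq_zero.mp h0 with h1 | h1
      · exact ha h1
      · have : ((m 0 + m 1 : ℕ) : K) = ((1 : ℕ) : K) := by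
          push_cast
          linear_combination h1
        exact hm (Nat.cast_injective this)
  | succ n ih =>
    intro m hm1 hm
    set m' : Fin 2 →₀ ℕ := m - Finsupp.single 1 1 + Finsupp.single 0 1 with hm'
    have hm'0 : m' 0 = m 0 + 1 := by
      simp [hm', Finsupp.add_apply, Finsupp.tsub_apply, Finsupp.single_apply]
    have hm'1 : m' 1 = n := by
      simp only [hm', Finsupp.add_apply, Finsupp.tsub_apply, Finsupp.single_apply]
      norm_num
      omega
    have hQ' : coeff m' Q = 0 := by
      apply ih m' hm'1
      omega
    have heq := h m
    rw [if_pos (by omega), ← hm', hQ', mul_zero, hR m hm] at heq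
    have hfac : coeff m Q * (a * (((m 0 : K) + (m 1 : K)) - 1)) = 0 := by
      linear_combination heq
    rcases mul_eq_zero.mp hfac with h0 | h0
    · exact h0
    · exfalso
      rcases mul_eq_zero.mp h0 with h1 | h1
      · exact ha h1
      · have : ((m 0 + m 1 : ℕ) : K) = ((1 : ℕ) : K) := by
          push_cast
          linear_combination h1
        exact hm (Nat.cast_injective this)

lemma fin2_decomp (m : Fin 2 →₀ ℕ) :
    m = Finsupp.single 0 (m 0) + Finsupp.single 1 (m 1) := by
  ext j
  fin_cases j <;> simp [Finsupp.add_apply, Finsupp.single_apply]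

/-- Reconstruction: a polynomial supported in total degree 1 is a linear form. -/
lemma reconstruct (Q : MvPolynomial (Fin 2) K)
    (h : ∀ m : Fin 2 →₀ ℕ, m 0 + m 1 ≠ 1 → coeff m Q = 0) :
    Q = C (coeff (Finsupp.single 0 1) Q) * X 0 + C (coeff (Finsupp.single 1 1) Q) * X 1 := by
  classical
  ext m
  rw [coeff_add, coeff_C_mul, coeff_C_mul, coeff_X', coeff_X']
  by_cases hm : m 0 + m 1 = 1
  · have hd := fin2_decomp m
    rcases Nat.le_one_iff_eq_zero_or_eq_one.mp (le_of_eq rfl) with _ | _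
    all_goals
      rcases Nat.eq_zero_or_pos (m 0) with h0 | h0
      · have h1 : m 1 = 1 := by omega
        have hme : m = Finsupp.single 1 1 := by rw [hd, h0, h1]; simp
        subst hme
        rw [if_neg, if_pos rfl]
        · simp
        · intro hc
          have := DFunLike.congr_fun hc (0 : Fin 2)
          simp [Finsupp.single_apply] at this
      · have h0' : m 0 = 1 := by omega
        have h1 : m 1 = 0 := by omega
        have hme : m = Finsupp.single 0 1 := by rw [hd, h0', h1]; simp
        subst hme
        rw [if_pos rfl, if_neg]
        · simp
        · intro hc
          have := DFunLike.congr_fun hc (1 : Fin 2)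
          simp [Finsupp.single_apply] at this
  · rw [h m hm, if_neg, if_neg]
    · simp
    · intro hc; apply hm; rw [← hc]; simp [Finsupp.single_apply]
    · intro hc; apply hm; rw [← hc]; simp [Finsupp.single_apply]

end IsotropyJordanAux

open IsotropyJordanAux Finsupp in
/-- Isotropy of the Jordan-block derivation `D = (aX + Y) ∂/∂X + aY ∂/∂Y`,
`a ≠ 0`: an automorphism commutes with `D` iff `ρ(X) = αX + βY`, `ρ(Y) = αY`. -/
theorem isotropy_jordan_block_derivation
    {K : Type*} [Field K] [CharZero K]
    (a : K) (ha : a ≠ 0)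
    (D : Derivation K (MvPolynomial (Fin 2) K) (MvPolynomial (Fin 2) K))
    (hDX : D (X 0) = C a * X 0 + X 1)
    (hDY : D (X 1) = C a * X 1)
    (ρ : MvPolynomial (Fin 2) K ≃ₐ[K] MvPolynomial (Fin 2) K) :
    (∀ g : MvPolynomial (Fin 2) K, ρ (D g) = D (ρ g)) ↔
      ∃ (α β : K), α ≠ 0 ∧
        ρ (X 0) = C α * X 0 + C β * X 1 ∧ ρ (X 1) = C α * X 1 := by
  classical
  have hρC : ∀ c : K, ρ (C c) = C c := fun c => by
    rw [← MvPolynomial.algebraMap_eq]; exact ρ.commutes c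
  have hDC : ∀ (c : K) (p : MvPolynomial (Fin 2) K), D (C c * p) = C c * D p := by
    intro c p
    rw [C_mul', Derivation.map_smul, C_mul']
  constructor
  · intro hcomm
    -- Step 1: ρ (X 1) is an eigenvector:  D Q = a Q.
    set Q : MvPolynomial (Fin 2) K := ρ (X 1) with hQdef
    have hQ : D Q = C a * Q := by
      rw [← hcomm (X 1), hDY, map_mul, hρC]
    have hQrec : ∀ m : Fin 2 →₀ ℕ,
        a * ((m 0 : K) + (m 1 : K)) * coeff m Q +
          (if m 1 ≠ 0 then
            ((((m - Finsupp.single 1 1 : Fin 2 →₀ ℕ) : Fin 2 → ℕ) 0 : K) + 1) *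
              coeff (m - Finsupp.single 1 1 + Finsupp.single 0 1) Q
          else 0) = a * coeff m Q + coeff m (0 : MvPolynomial (Fin 2) K) := by
      intro m
      rw [← coeff_D a D hDX hDY, hQ, coeff_C_mul, coeff_zero, add_zero]
    have hQvan := vanish a ha Q 0 (fun m _ => coeff_zero m) hQrec
    -- coefficient of X 0 in Q vanishes (from the recursion at m = e1)
    have he10 : (Finsupp.single (1 : Fin 2) 1) 0 = 0 := by
      simp [Finsupp.single_apply]
    have he11 : (Finsupp.single (1 : Fin 2) 1) 1 = 1 := by simp
    have hshift : Finsupp.single (1 : Fin 2) 1 - Finsupp.single 1 1 + Finsupp.single 0 1 =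
        Finsupp.single (0 : Fin 2) 1 := by
      simp
    have hQ0 : coeff (Finsupp.single 0 1) Q = 0 := by
      have heq := hQrec (Finsupp.single 1 1)
      rw [he10, he11, if_pos (by norm_num), hshift, coeff_zero] at heq
      have : ((((Finsupp.single (1 : Fin 2) 1 - Finsupp.single 1 1 : Fin 2 →₀ ℕ) : Fin 2 → ℕ) 0 : K) + 1) = 1 := by
        simp [Finsupp.tsub_apply, he10]
      rw [this, one_mul] at heq
      linear_combination heq
    set α : K := coeff (Finsupp.single 1 1) Q with hαdef
    have hQeq : Q = C α * X 1 := by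
      rw [reconstruct Q hQvan, hQ0]
      simp [hαdef]
    -- Step 2: ρ (X 0).
    set P : MvPolynomial (Fin 2) K := ρ (X 0) with hPdef
    have hP : D P = C a * P + C α * X 1 := by
      rw [← hcomm (X 0), hDX, map_add, map_mul, hρC, ← hQdef, hQeq]
    have hRcoeff : ∀ m : Fin 2 →₀ ℕ, coeff m (C α * X 1 : MvPolynomial (Fin 2) K) =
        if Finsupp.single (1 : Fin 2) 1 = m then α else 0 := by
      intro m
      rw [coeff_C_mul, coeff_X']
      split_ifs <;> simp
    have hRvan : ∀ m : Fin 2 →₀ ℕ, m 0 + m 1 ≠ 1 → coeff m (C α * X 1 : MvPolynomial (Fin 2) K) = 0 := by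
      intro m hm
      rw [hRcoeff m, if_neg]
      intro hc
      apply hm
      rw [← hc, he10, he11]
    have hPrec : ∀ m : Fin 2 →₀ ℕ,
        a * ((m 0 : K) + (m 1 : K)) * coeff m P +
          (if m 1 ≠ 0 then
            ((((m - Finsupp.single 1 1 : Fin 2 →₀ ℕ) : Fin 2 → ℕ) 0 : K) + 1) *
              coeff (m - Finsupp.single 1 1 + Finsupp.single 0 1) P
          else 0) = a * coeff m P + coeff m (C α * X 1 : MvPolynomial (Fin 2) K) := by
      intro m
      rw [← coeff_D a D hDX hDY, hP, coeff_add, coeff_C_mul]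
    have hPvan := vanish a ha P (C α * X 1) hRvan hPrec
    have hP0 : coeff (Finsupp.single 0 1) P = α := by
      have heq := hPrec (Finsupp.single 1 1)
      rw [he10, he11, if_pos (by norm_num), hshift, hRcoeff, if_pos rfl] at heq
      have : ((((Finsupp.single (1 : Fin 2) 1 - Finsupp.single 1 1 : Fin 2 →₀ ℕ) : Fin 2 → ℕ) 0 : K) + 1) = 1 := by
        simp [Finsupp.tsub_apply, he10]
      rw [this, one_mul] at heq
      linear_combination heq
    set β : K := coeff (Finsupp.single 1 1) P with hβdef
    have hPeq : P = C α * X 0 + C β * X 1 := by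
      rw [reconstruct P hPvan, hP0]
    have hαne : α ≠ 0 := by
      intro h0
      have hQ0' : ρ (X 1) = ρ 0 := by
        rw [← hQdef, hQeq, h0, map_zero]
        simp
      have := ρ.injective hQ0'
      exact MvPolynomial.X_ne_zero 1 this
    exact ⟨α, β, hαne, hPeq, hQeq⟩
  · rintro ⟨α, β, hα, hρX, hρY⟩
    intro g
    have key : ∀ j : Fin 2, ρ (D (X j)) = D (ρ (X j)) := by
      intro j
      fin_cases j
      · show ρ (D (X 0)) = D (ρ (X 0))
        rw [hDX, hρX, map_add, map_mul, hρC, hρX, hρY, map_add, hDC, hDC, hDX, hDY]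
        ring
      · show ρ (D (X 1)) = D (ρ (X 1))
        rw [hDY, hρY, map_mul, hρC, hρY, hDC, hDY]
        ring
    induction g using MvPolynomial.induction_on with
    | C r => rw [derivation_C, map_zero, hρC, derivation_C]
    | add p q hp hq => rw [map_add, map_add, map_add, hp, hq, map_add]
    | mul_X p i hp =>
      simp only [Derivation.leibniz, smul_eq_mul, map_add, map_mul, hp, key i]
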